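/- Let z be a commutative E-algebra (E a field), R a z-algebra with z mapping into the center, and let M be an R-module that is z-finite, meaning M is the union of the submodules M_{J=0} over ideals J ⊆ z of finite codimension. Then M decomposes as the internal direct sum M = ⊕_{m ∈ Max(z)} M_m, where M_m = {x ∈ M : ∃ n ≥ 1, mⁿ·x = 0}, and each M_m is an R-submodule. -/

import Mathlib

open Ideal

/-- Key lemma: if `z ⧸ J` is finite dimensional over a field `E`, then `J` contains a
finite product of `n`-th powers of maximal ideals. -/
lemma keyA {E z : Type*} [Field E] [CommRing z] [Algebra E z]
    (J : Ideal z) (hJ : FiniteDimensional E (z ⧸ J)) :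
    ∃ (s : Finset (Ideal z)) (n : ℕ), 1 ≤ n ∧ (∀ m ∈ s, m.IsMaximal) ∧
      (∏ m ∈ s, m ^ n) ≤ J := by
  classical
  haveI := hJ
  haveI : IsArtinianRing (z ⧸ J) := IsArtinianRing.of_finite E (z ⧸ J)
  obtain ⟨n, hn⟩ := IsArtinianRing.isNilpotent_jacobson_bot (R := z ⧸ J)
  have hjac : J.jacobson ^ (n + 1) ≤ J := by
    intro a ha
    have hmem : Ideal.Quotient.mk J a ∈ Ideal.map (Ideal.Quotient.mk J) (J.jacobson ^ (n + 1)) :=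
      Ideal.mem_map_of_mem _ ha
    rw [Ideal.map_pow, Ideal.map_jacobson_of_surjective Ideal.Quotient.mk_surjective
      (le_of_eq Ideal.mk_ker), Ideal.map_quotient_self] at hmem
    have h0 : (Ideal.jacobson (⊥ : Ideal (z ⧸ J))) ^ (n + 1) ≤ ⊥ := by
      calc (Ideal.jacobson (⊥ : Ideal (z ⧸ J))) ^ (n + 1)
          ≤ (Ideal.jacobson (⊥ : Ideal (z ⧸ J))) ^ n :=
            Ideal.pow_le_pow_right (Nat.le_succ n)
        _ = ⊥ := hn
    have := h0 hmem
    rwa [Submodule.mem_bot, Ideal.Quotient.eq_zero_iff_mem] at this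
  -- the set of maximal ideals containing J is finite
  have hTfin : {m : Ideal z | J ≤ m ∧ m.IsMaximal}.Finite := by
    have hfin : {I : Ideal (z ⧸ J) | I.IsMaximal}.Finite :=
      IsArtinianRing.setOfPred_isMaximal_finite (z ⧸ J)
    apply Set.Finite.of_finite_image (f := Ideal.map (Ideal.Quotient.mk J))
    · apply hfin.subset
      rintro I ⟨m, ⟨hJm, hmax⟩, rfl⟩
      rcases Ideal.map_eq_top_or_isMaximal_of_surjective (Ideal.Quotient.mk J) Ideal.Quotient.mk_surjective hmax with
        h | h
    -- rule out the top case
      · exfalso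
        have := congrArg (Ideal.comap (Ideal.Quotient.mk J)) h
        rw [Ideal.comap_map_of_surjective _ Ideal.Quotient.mk_surjective,
          Ideal.comap_top, ← RingHom.ker_eq_comap_bot, Ideal.mk_ker,
          sup_eq_left.mpr hJm] at this
        exact hmax.ne_top this
      · exact h
    · rintro m1 ⟨hJ1, hmax1⟩ m2 ⟨hJ2, hmax2⟩ h
      have := congrArg (Ideal.comap (Ideal.Quotient.mk J)) h
      rwa [Ideal.comap_map_of_surjective _ Ideal.Quotient.mk_surjective,
        Ideal.comap_map_of_surjective _ Ideal.Quotient.mk_surjective,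
        ← RingHom.ker_eq_comap_bot, Ideal.mk_ker,
        sup_eq_left.mpr hJ1, sup_eq_left.mpr hJ2] at this
  refine ⟨hTfin.toFinset, n + 1, Nat.le_add_left 1 n, ?_, ?_⟩
  · intro m hm
    exact (hTfin.mem_toFinset.mp hm).2
  · have hprod : (∏ m ∈ hTfin.toFinset, m) ≤ J.jacobson := by
      apply le_sInf
      rintro m ⟨hJm, hmax⟩
      exact Ideal.prod_le_inf.trans (Finset.inf_le (hTfin.mem_toFinset.mpr ⟨hJm, hmax⟩))
    calc (∏ m ∈ hTfin.toFinset, m ^ (n + 1))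
        = (∏ m ∈ hTfin.toFinset, m) ^ (n + 1) := Finset.prod_pow _ _ _
      _ ≤ J.jacobson ^ (n + 1) := Ideal.pow_right_mono hprod _
      _ ≤ J := hjac

/-- A `z`-finite `R`-module (every element killed by an ideal of
finite codimension of the commutative `E`-algebra `z`, which maps into the
center of `R`) is the internal direct sum of its `m`-primary components over
the maximal ideals `m` of `z`, each of which is an `R`-submodule. -/
theorem stmt2 (E z R M : Type*) [Field E] [CommRing z] [Algebra E z]
    [Ring R] [Algebra z R]
    (hcentral : ∀ a : z, algebraMap z R a ∈ Set.center R)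
    [AddCommGroup M] [Module R M]
    (hfin : ∀ x : M, ∃ J : Ideal z, FiniteDimensional E (z ⧸ J) ∧
      ∀ a ∈ J, algebraMap z R a • x = 0) :
    ∃ Mm : {m : Ideal z // m.IsMaximal} → Submodule R M,
      (∀ m : {m : Ideal z // m.IsMaximal}, (Mm m : Set M) =
        {x : M | ∃ n : ℕ, 1 ≤ n ∧ ∀ a ∈ (m : Ideal z) ^ n,
          algebraMap z R a • x = 0}) ∧
      iSupIndep Mm ∧ (⨆ m, Mm m) = ⊤ := by
  classical
  set f : z →+* R := algebraMap z R with hfdef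
  have hcomm : ∀ (a : z) (r : R) (x : M), f a • (r • x) = r • (f a • x) := by
    intro a r x
    rw [← mul_smul, (hcentral a).comm r, mul_smul]
  let P : {m : Ideal z // m.IsMaximal} → Submodule R M := fun m =>
    { carrier := {x : M | ∃ n : ℕ, 1 ≤ n ∧ ∀ a ∈ (m : Ideal z) ^ n, f a • x = 0}
      zero_mem' := ⟨1, le_refl 1, fun a _ => smul_zero _⟩
      add_mem' := by
        rintro x y ⟨n, hn, hx⟩ ⟨k, hk, hy⟩
        refine ⟨max n k, le_trans hn (le_max_left n k), fun a ha => ?_⟩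
        rw [smul_add, hx a (Ideal.pow_le_pow_right (le_max_left n k) ha),
          hy a (Ideal.pow_le_pow_right (le_max_right n k) ha), add_zero]
      smul_mem' := by
        rintro r x ⟨n, hn, hx⟩
        exact ⟨n, hn, fun a ha => by rw [hcomm a r x, hx a ha, smul_zero]⟩ }
  refine ⟨P, fun m => rfl, ?_, ?_⟩
  · -- independence
    rw [iSupIndep_def]
    intro m0
    -- the submodule of elements killed by an ideal coprime to m0
    let N : Submodule R M :=
      { carrier := {x : M | ∃ K : Ideal z, IsCoprime K (m0 : Ideal z) ∧ ∀ a ∈ K, f a • x = 0}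
        zero_mem' := ⟨⊤, by rw [← Ideal.one_eq_top]; exact isCoprime_one_left, fun a _ => smul_zero _⟩
        add_mem' := by
          rintro x y ⟨K1, hK1, hx⟩ ⟨K2, hK2, hy⟩
          refine ⟨K1 * K2, hK1.mul_left hK2, fun a ha => ?_⟩
          rw [smul_add, hx a (Ideal.mul_le_left ha), hy a (Ideal.mul_le_right ha), add_zero]
        smul_mem' := by
          rintro r x ⟨K, hK, hx⟩
          exact ⟨K, hK, fun a ha => by rw [hcomm a r x, hx a ha, smul_zero]⟩ }
    have hsup : (⨆ (j) (_ : j ≠ m0), P j) ≤ N := by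
      apply iSup₂_le
      rintro j hj x ⟨n, hn, hx⟩
      refine ⟨(j : Ideal z) ^ n, ?_, hx⟩
      exact (Ideal.isCoprime_iff_sup_eq.mpr
        (j.2.coprime_of_ne m0.2 (by simpa [Subtype.ext_iff] using hj))).pow_left
    rw [disjoint_iff_inf_le]
    refine le_trans (inf_le_inf_left _ hsup) ?_
    rintro x ⟨⟨n, hn, hx⟩, K, hK, hKx⟩
    have hcop : IsCoprime K ((m0 : Ideal z) ^ n) := hK.pow_right
    have hsup' : K ⊔ (m0 : Ideal z) ^ n = ⊤ := Ideal.isCoprime_iff_sup_eq.mp hcop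
    have h1 : (1 : z) ∈ K ⊔ (m0 : Ideal z) ^ n := hsup' ▸ Submodule.mem_top
    obtain ⟨a, ha, b, hb, hab⟩ := Submodule.mem_sup.mp h1
    have hx0 : x = 0 := by
      calc x = f (a + b) • x := by rw [hab, map_one, one_smul]
        _ = f a • x + f b • x := by rw [map_add, add_smul]
        _ = 0 := by rw [hKx a ha, hx b hb, add_zero]
    simp [hx0]
  · -- spanning
    rw [eq_top_iff]
    rintro x -
    obtain ⟨J, hJfd, hJkill⟩ := hfin x
    obtain ⟨s, n, hn1, hmax, hprodJ⟩ := keyA (E := E) J hJfd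
    rcases s.eq_empty_or_nonempty with rfl | ⟨m₀, hm₀⟩
    · have hx0 : x = 0 := by
        have h1 : (1 : z) ∈ J := hprodJ (by simp)
        have := hJkill 1 h1
        rwa [map_one, one_smul] at this
      simp [hx0]
    · -- the complementary products
      let c : Ideal z → Ideal z := fun m => ∏ m' ∈ s.erase m, m' ^ n
      have hKtop : (⨆ m ∈ s, c m) = ⊤ := by
        by_contra hK
        obtain ⟨m1, hm1max, hKm1⟩ := Ideal.exists_le_maximal _ hK
        haveI := hm1max.isPrime
        have key : ∀ m ∈ s, ∃ m' ∈ s.erase m, m' = m1 := by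
          intro m hm
          have hcm : c m ≤ m1 := le_trans (le_iSup₂ (f := fun m _ => c m) m hm) hKm1
          obtain ⟨m', hm', hle⟩ := (Ideal.IsPrime.prod_le hm1max.isPrime).mp hcm
          have hle' : m' ≤ m1 := Ideal.IsPrime.le_of_pow_le hle
          exact ⟨m', hm',
            (hmax m' (Finset.mem_of_mem_erase hm')).eq_of_le hm1max.ne_top hle'⟩
        obtain ⟨m', hm', rfl⟩ := key m₀ hm₀
        obtain ⟨m'', hm'', heq2⟩ := key m' (Finset.mem_of_mem_erase hm')
        exact Finset.ne_of_mem_erase hm'' heq2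
      have h1 : (1 : z) ∈ ⨆ m ∈ s, c m := hKtop ▸ Submodule.mem_top
      obtain ⟨μ, hμ⟩ := (Submodule.mem_iSup_finset_iff_exists_sum (fun m => c m) 1).mp h1
      have hxsum : x = ∑ m ∈ s, f (μ m : z) • x := by
        have hmap : f (1 : z) = ∑ m ∈ s, f (μ m : z) := by rw [← hμ, map_sum]
        calc x = f (1 : z) • x := by rw [map_one, one_smul]
          _ = ∑ m ∈ s, f (μ m : z) • x := by rw [hmap, Finset.sum_smul]
      rw [hxsum]
      apply Submodule.sum_mem
      intro m hm
      apply Submodule.mem_iSup_of_mem ⟨m, hmax m hm⟩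
      refine ⟨n, hn1, fun a ha => ?_⟩
      have hmem : a * (μ m : z) ∈ J := by
        apply hprodJ
        have h2 : m ^ n * c m = ∏ m' ∈ s, m' ^ n :=
          Finset.mul_prod_erase s (fun m' => m' ^ n) hm
        have : a * (μ m : z) ∈ m ^ n * c m := Ideal.mul_mem_mul ha (μ m).2
        rwa [h2] at this
      rw [← mul_smul, ← _root_.map_mul]
      exact hJkill _ hmem
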